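/- arXiv:1710.05478 — 2 statements merged into one kernel-verified Lean document; each statement's English description precedes it below -/
import Mathlib

section
/- Let φ(λ) = ∫₀^∞ (1 - e^{-λt}) μ(dt) with ∫ (1 ∧ t) μ(dt) < ∞, and define H(λ) = φ(λ) - λ φ'(λ). Then H(λx) ≤ x² H(λ) for all λ > 0 and x ≥ 1. -/
open MeasureTheory Real Set

private lemma g_eq (v : ℝ) :
    1 - Real.exp (-v) - v * Real.exp (-v) = ∫ s in (0:ℝ)..v, s * Real.exp (-s) := by
  have hderiv : ∀ s : ℝ, HasDerivAt (fun s : ℝ => -((s + 1) * Real.exp (-s)))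
      (s * Real.exp (-s)) s := by
    intro s
    have h1 : HasDerivAt (fun s : ℝ => s + 1) 1 s := (hasDerivAt_id s).add_const 1
    have h2 : HasDerivAt (fun s : ℝ => Real.exp (-s)) (-Real.exp (-s)) s := by
      simpa [Function.comp_def] using (Real.hasDerivAt_exp (-s)).comp s ((hasDerivAt_id s).neg)
    have : HasDerivAt (fun s : ℝ => -((s + 1) * Real.exp (-s)))
        (-(1 * Real.exp (-s) + (s + 1) * -Real.exp (-s))) s := (h1.mul h2).neg
    convert this using 1
    ring
  have hcont : Continuous fun s : ℝ => s * Real.exp (-s) := by continuity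
  rw [intervalIntegral.integral_eq_sub_of_hasDerivAt (fun s _ => hderiv s)
      (hcont.intervalIntegrable _ _)]
  simp [Real.exp_zero]
  ring

private lemma g_scale {u x : ℝ} (hu : 0 ≤ u) (hx : 1 ≤ x) :
    1 - Real.exp (-(u * x)) - u * x * Real.exp (-(u * x)) ≤
      x ^ 2 * (1 - Real.exp (-u) - u * Real.exp (-u)) := by
  have hx0 : (0:ℝ) < x := lt_of_lt_of_le one_pos hx
  rw [g_eq, g_eq]
  have hsub : (∫ s in (0:ℝ)..(u * x), s * Real.exp (-s))
      = x ^ 2 * ∫ r in (0:ℝ)..u, r * Real.exp (-(x * r)) := by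
    have h := intervalIntegral.smul_integral_comp_mul_left
      (fun s : ℝ => s * Real.exp (-s)) (a := 0) (b := u) x
    rw [mul_zero] at h
    rw [mul_comm u x, ← h, smul_eq_mul]
    have : (∫ r in (0:ℝ)..u, x * r * Real.exp (-(x * r)))
        = x * ∫ r in (0:ℝ)..u, r * Real.exp (-(x * r)) := by
      rw [← intervalIntegral.integral_const_mul]
      congr 1; ext r; ring
    rw [this]
    ring
  rw [hsub]
  have hmono : (∫ r in (0:ℝ)..u, r * Real.exp (-(x * r)))
      ≤ ∫ r in (0:ℝ)..u, r * Real.exp (-r) := by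
    apply intervalIntegral.integral_mono_on hu
    · exact ((by continuity : Continuous fun r : ℝ => r * Real.exp (-(x * r))).intervalIntegrable _ _)
    · exact ((by continuity : Continuous fun r : ℝ => r * Real.exp (-r)).intervalIntegrable _ _)
    · intro r hr
      have hr0 : 0 ≤ r := hr.1
      have : Real.exp (-(x * r)) ≤ Real.exp (-r) := by
        apply Real.exp_le_exp.mpr
        nlinarith
      exact mul_le_mul_of_nonneg_left this hr0
  nlinarith

private lemma g_nonneg {v : ℝ} (hv : 0 ≤ v) :
    0 ≤ 1 - Real.exp (-v) - v * Real.exp (-v) := by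
  have h1 : Real.exp (-v) * Real.exp v = 1 := by
    rw [← Real.exp_add]; simp
  have h2 : v + 1 ≤ Real.exp v := Real.add_one_le_exp v
  have h3 : 0 < Real.exp (-v) := Real.exp_pos _
  nlinarith

private lemma g_le_min {v : ℝ} (hv : 0 ≤ v) :
    1 - Real.exp (-v) - v * Real.exp (-v) ≤ min 1 v := by
  have h3 : 0 < Real.exp (-v) := Real.exp_pos _
  have h4 : 1 - v ≤ Real.exp (-v) := by
    have := Real.add_one_le_exp (-v); linarith
  rcases le_total 1 v with h | h
  · rw [min_eq_left h]; nlinarith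
  · rw [min_eq_right h]; nlinarith

private lemma g_integrable (μ : Measure ℝ)
    (hμ : IntegrableOn (fun t => min 1 t) (Ioi 0) μ) {c : ℝ} (hc : 0 < c) :
    IntegrableOn (fun t => 1 - Real.exp (-(c * t)) - c * t * Real.exp (-(c * t))) (Ioi 0) μ := by
  apply Integrable.mono' (hμ.const_mul (max 1 c))
  · exact ((by continuity : Continuous fun t : ℝ =>
      1 - Real.exp (-(c * t)) - c * t * Real.exp (-(c * t)))).aestronglyMeasurable
  · rw [ae_restrict_iff' measurableSet_Ioi]
    filter_upwards with t ht
    have ht0 : 0 < t := ht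
    have hct : 0 ≤ c * t := le_of_lt (mul_pos hc ht0)
    have h1 := g_nonneg hct
    have h2 := g_le_min hct
    rw [Real.norm_eq_abs, abs_of_nonneg h1]
    have : min 1 (c * t) ≤ max 1 c * min 1 t := by
      rcases le_total t 1 with h | h
      · rw [min_eq_right h]
        calc min 1 (c * t) ≤ c * t := min_le_right _ _
          _ ≤ max 1 c * t := by
              apply mul_le_mul_of_nonneg_right (le_max_right _ _) (le_of_lt ht0)
      · rw [min_eq_left h]
        calc min 1 (c * t) ≤ 1 := min_le_left _ _
          _ ≤ max 1 c * 1 := by simpa using le_max_left 1 c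
    linarith

theorem H_scaling_upper
    (μ : Measure ℝ) (hμ : IntegrableOn (fun t => min 1 t) (Ioi 0) μ)
    (H : ℝ → ℝ)
    (hH : ∀ lam : ℝ, H lam =
      ∫ t in Ioi (0:ℝ),
        (1 - Real.exp (-(lam * t)) - lam * t * Real.exp (-(lam * t))) ∂μ) :
    ∀ lam > (0:ℝ), ∀ x ≥ (1:ℝ), H (lam * x) ≤ x ^ 2 * H lam := by
  intro lam hlam x hx
  have hx0 : (0:ℝ) < x := lt_of_lt_of_le one_pos hx
  have hlx : 0 < lam * x := mul_pos hlam hx0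
  rw [hH, hH, ← MeasureTheory.integral_const_mul]
  apply setIntegral_mono_on
  · exact g_integrable μ hμ hlx
  · exact (g_integrable μ hμ hlam).const_mul _
  · exact measurableSet_Ioi
  · intro t ht
    have ht0 : 0 < t := ht
    have hu : 0 ≤ lam * t := le_of_lt (mul_pos hlam ht0)
    have := g_scale hu hx
    have heq : lam * x * t = lam * t * x := by ring
    rw [heq]
    convert this using 3 <;> ring
end

section
/- Let φ(λ) = ∫₀^∞ (1 - e^{-λt}) μ(dt) with ∫ (1 ∧ t) μ(dt) < ∞ and H(λ) = φ(λ) - λφ'(λ). If H satisfies the lower scaling condition L_a(γ, C_L) (i.e. H(λx) ≥ C_L x^γ H(λ) for all λ > a, x ≥ 1), then φ satisfies L_a(γ, C_L) as well. -/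
open MeasureTheory Real Set Filter Topology

noncomputable def gfun (u : ℝ) : ℝ := 1 - Real.exp (-u) - u * Real.exp (-u)

lemma gfun_cont : Continuous gfun := by
  unfold gfun
  exact (continuous_const.sub (Real.continuous_exp.comp continuous_neg)).sub
    (continuous_id.mul (Real.continuous_exp.comp continuous_neg))

lemma gfun_nonneg {u : ℝ} (hu : 0 ≤ u) : 0 ≤ gfun u := by
  have h1 : u + 1 ≤ Real.exp u := Real.add_one_le_exp u
  have h2 : (0:ℝ) < Real.exp (-u) := Real.exp_pos _
  have h3 : (u + 1) * Real.exp (-u) ≤ Real.exp u * Real.exp (-u) :=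
    mul_le_mul_of_nonneg_right h1 h2.le
  rw [← Real.exp_add] at h3
  simp only [add_neg_cancel, Real.exp_zero] at h3
  unfold gfun; nlinarith

lemma one_sub_exp_le_min {u : ℝ} (hu : 0 ≤ u) : 1 - Real.exp (-u) ≤ min 1 u := by
  have h1 : -u + 1 ≤ Real.exp (-u) := Real.add_one_le_exp (-u)
  have h2 : (0:ℝ) < Real.exp (-u) := Real.exp_pos _
  exact le_min (by linarith) (by linarith)

lemma mul_exp_le_one {u : ℝ} (hu : 0 ≤ u) : u * Real.exp (-u) ≤ 1 := by
  have h1 : u + 1 ≤ Real.exp u := Real.add_one_le_exp u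
  have h2 : (0:ℝ) < Real.exp (-u) := Real.exp_pos _
  have h3 : u * Real.exp (-u) ≤ Real.exp u * Real.exp (-u) := by
    apply mul_le_mul_of_nonneg_right (by linarith) h2.le
  rw [← Real.exp_add] at h3
  simpa using h3

lemma min_mul_ineq {s t : ℝ} (hs : 0 ≤ s) (ht : 0 ≤ t) :
    min 1 (s * t) ≤ max 1 s * min 1 t := by
  rcases le_total t 1 with h | h
  · rw [min_eq_right h]
    calc min 1 (s * t) ≤ s * t := min_le_right _ _
      _ ≤ max 1 s * t := by
          apply mul_le_mul_of_nonneg_right (le_max_right 1 s) ht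
  · rw [min_eq_left h]
    calc min 1 (s * t) ≤ 1 := min_le_left _ _
      _ ≤ max 1 s * 1 := by simpa using le_max_left 1 s

theorem phi_inherits_lower_scaling
    (μ : Measure ℝ) (hμ : IntegrableOn (fun t => min 1 t) (Ioi 0) μ)
    (φ φ' H : ℝ → ℝ)
    (hφ : ∀ lam : ℝ, φ lam = ∫ t in Ioi (0:ℝ), (1 - Real.exp (-(lam * t))) ∂μ)
    (hφ' : ∀ lam : ℝ, φ' lam = ∫ t in Ioi (0:ℝ), t * Real.exp (-(lam * t)) ∂μ)
    (hH : ∀ lam : ℝ, H lam = φ lam - lam * φ' lam)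
    (a γ C_L : ℝ) (ha : 0 ≤ a) (hγ : 0 < γ) (hCL : C_L ∈ Ioc (0:ℝ) 1)
    (hLH : ∀ lam > a, ∀ x ≥ (1:ℝ), C_L * x ^ γ * H lam ≤ H (lam * x)) :
    ∀ lam > a, ∀ x ≥ (1:ℝ), C_L * x ^ γ * φ lam ≤ φ (lam * x) := by
  classical
  -- σ-finiteness of the restricted measure
  have hsf : (μ.restrict (Ioi 0)).FiniteSpanningSetsIn univ :=
    { set := fun n => {t : ℝ | 1 / (n + 1 : ℝ) ≤ min 1 t} ∪ Iic 0
      set_mem := fun _ => mem_univ _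
      finite := by
        intro n
        have h1 : μ.restrict (Ioi 0) {t : ℝ | 1 / (n + 1 : ℝ) ≤ min 1 t} < ⊤ :=
          hμ.measure_ge_lt_top (by positivity)
        have h2 : μ.restrict (Ioi 0) (Iic 0) = 0 := by
          rw [Measure.restrict_apply measurableSet_Iic]
          have hemp : Iic (0:ℝ) ∩ Ioi 0 = ∅ := by
            ext t
            simp only [mem_inter_iff, mem_Iic, mem_Ioi, mem_empty_iff_false, iff_false, not_and,
              not_lt]
            intro h3; exact h3
          rw [hemp, measure_empty]
        calc μ.restrict (Ioi 0) ({t : ℝ | 1 / (n + 1 : ℝ) ≤ min 1 t} ∪ Iic 0)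
            ≤ μ.restrict (Ioi 0) {t : ℝ | 1 / (n + 1 : ℝ) ≤ min 1 t}
              + μ.restrict (Ioi 0) (Iic 0) := measure_union_le _ _
          _ < ⊤ := by rw [h2, add_zero]; exact h1
      spanning := by
        ext t
        simp only [mem_iUnion, mem_union, mem_setOf_eq, mem_Iic, mem_univ, iff_true]
        rcases le_or_gt t 0 with h | h
        · exact ⟨0, Or.inr h⟩
        · have hpos : 0 < min 1 t := lt_min one_pos h
          obtain ⟨n, hn⟩ := exists_nat_one_div_lt hpos
          exact ⟨n, Or.inl hn.le⟩ }
  haveI : SigmaFinite (μ.restrict (Ioi 0)) := hsf.sigmaFinite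
  -- integrability of the basic integrands
  have hb1 : ∀ s : ℝ, 0 < s → IntegrableOn (fun t => 1 - Real.exp (-(s * t))) (Ioi 0) μ := by
    intro s hs
    apply Integrable.mono' (hμ.const_mul (max 1 s))
    · exact (continuous_const.sub (Real.continuous_exp.comp
        ((continuous_const.mul continuous_id).neg))).aestronglyMeasurable
    · filter_upwards [ae_restrict_mem measurableSet_Ioi] with t ht
      have ht0 : (0:ℝ) < t := ht
      have hst : 0 ≤ s * t := by positivity
      have h1 : 1 - Real.exp (-(s * t)) ≤ min 1 (s * t) := one_sub_exp_le_min hst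
      have h2 : 0 ≤ 1 - Real.exp (-(s * t)) := by
        have := Real.exp_le_one_iff.mpr (neg_nonpos.mpr hst)
        linarith
      rw [Real.norm_eq_abs, abs_of_nonneg h2]
      exact h1.trans (min_mul_ineq hs.le ht0.le)
  have hb2 : ∀ s : ℝ, 0 < s → IntegrableOn (fun t => t * Real.exp (-(s * t))) (Ioi 0) μ := by
    intro s hs
    apply Integrable.mono' (hμ.const_mul (max 1 s⁻¹))
    · exact (continuous_id.mul (Real.continuous_exp.comp
        ((continuous_const.mul continuous_id).neg))).aestronglyMeasurable
    · filter_upwards [ae_restrict_mem measurableSet_Ioi] with t ht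
      have ht0 : (0:ℝ) < t := ht
      have hst : 0 ≤ s * t := by positivity
      have h2 : 0 ≤ t * Real.exp (-(s * t)) := by positivity
      rw [Real.norm_eq_abs, abs_of_nonneg h2]
      rcases le_total t 1 with h | h
      · rw [min_eq_right h]
        have he : Real.exp (-(s * t)) ≤ 1 := Real.exp_le_one_iff.mpr (neg_nonpos.mpr hst)
        calc t * Real.exp (-(s * t)) ≤ t * 1 := by
              apply mul_le_mul_of_nonneg_left he ht0.le
          _ = t := mul_one t
          _ ≤ max 1 s⁻¹ * t := le_mul_of_one_le_left ht0.le (le_max_left _ _)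
      · rw [min_eq_left h]
        have hm : (s * t) * Real.exp (-(s * t)) ≤ 1 := mul_exp_le_one hst
        have : t * Real.exp (-(s * t)) ≤ s⁻¹ := by
          rw [← mul_le_mul_iff_of_pos_left hs, ← mul_assoc]
          calc s * t * Real.exp (-(s * t)) ≤ 1 := hm
            _ = s * s⁻¹ := (mul_inv_cancel₀ hs.ne').symm
        calc t * Real.exp (-(s * t)) ≤ s⁻¹ := this
          _ ≤ max 1 s⁻¹ * 1 := by simpa using le_max_right 1 s⁻¹
  -- integrability of g(s·) and the formula for H
  have hg_int : ∀ s : ℝ, 0 < s → IntegrableOn (fun t => gfun (s * t)) (Ioi 0) μ := by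
    intro s hs
    apply Integrable.congr ((hb1 s hs).sub ((hb2 s hs).const_mul s))
    filter_upwards with t
    simp only [Pi.sub_apply]
    unfold gfun; ring
  have hHs : ∀ s : ℝ, 0 < s → H s = ∫ t in Ioi (0:ℝ), gfun (s * t) ∂μ := by
    intro s hs
    rw [hH, hφ, hφ', ← integral_const_mul, ← integral_sub (hb1 s hs) ((hb2 s hs).const_mul s)]
    apply integral_congr_ae
    filter_upwards with t
    unfold gfun; ring
  -- the pointwise improper integral computation
  have hderiv : ∀ (t : ℝ), 0 < t → ∀ (l : ℝ), 0 < l → ∀ x ∈ Ici l,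
      HasDerivAt (fun s => -((1 - Real.exp (-(s * t))) / s)) (gfun (x * t) / x ^ 2) x := by
    intro t ht l hl x hx
    have hx0 : x ≠ 0 := (lt_of_lt_of_le hl hx).ne'
    have h1 : HasDerivAt (fun s : ℝ => -(s * t)) (-t) x := by
      simpa using ((hasDerivAt_id x).mul_const t).fun_neg
    have h2 : HasDerivAt (fun s : ℝ => Real.exp (-(s * t)))
        (Real.exp (-(x * t)) * (-t)) x := h1.exp
    have h3 : HasDerivAt (fun s : ℝ => 1 - Real.exp (-(s * t)))
        (-(Real.exp (-(x * t)) * (-t))) x := h2.const_sub 1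
    have h4 : HasDerivAt (fun s : ℝ => (1 - Real.exp (-(s * t))) / s)
        ((-(Real.exp (-(x * t)) * (-t)) * x - (1 - Real.exp (-(x * t))) * 1) / x ^ 2) x :=
      h3.div (hasDerivAt_id x) hx0
    have heq : gfun (x * t) / x ^ 2
        = -((-(Real.exp (-(x * t)) * (-t)) * x - (1 - Real.exp (-(x * t))) * 1) / x ^ 2) := by
      unfold gfun; ring
    rw [heq]
    exact h4.neg
  have htend : ∀ (t : ℝ), 0 < t →
      Tendsto (fun s => -((1 - Real.exp (-(s * t))) / s)) atTop (𝓝 0) := by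
    intro t ht
    have h1 : Tendsto (fun s : ℝ => s * t) atTop atTop :=
      Tendsto.atTop_mul_const ht tendsto_id
    have h2 : Tendsto (fun s : ℝ => Real.exp (-(s * t))) atTop (𝓝 0) :=
      Real.tendsto_exp_atBot.comp (tendsto_neg_atTop_atBot.comp h1)
    have h3 : Tendsto (fun s : ℝ => 1 - Real.exp (-(s * t))) atTop (𝓝 1) := by
      simpa using tendsto_const_nhds.sub h2
    have h4 : Tendsto (fun s : ℝ => (1 - Real.exp (-(s * t))) / s) atTop (𝓝 0) :=
      h3.div_atTop tendsto_id
    simpa using h4.neg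
  have hpos' : ∀ (t : ℝ), 0 < t → ∀ (l : ℝ), 0 < l → ∀ x ∈ Ioi l,
      0 ≤ gfun (x * t) / x ^ 2 := by
    intro t ht l hl x hx
    have hx0 : 0 < x := lt_trans hl hx
    exact div_nonneg (gfun_nonneg (by positivity)) (by positivity)
  have hcalc : ∀ (t : ℝ), 0 < t → ∀ (l : ℝ), 0 < l →
      ∫ s in Ioi l, gfun (s * t) / s ^ 2 = (1 - Real.exp (-(l * t))) / l := by
    intro t ht l hl
    have := integral_Ioi_of_hasDerivAt_of_nonneg' (hderiv t ht l hl)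
      (hpos' t ht l hl) (htend t ht)
    rw [this]; ring
  have hcalc_int : ∀ (t : ℝ), 0 < t → ∀ (l : ℝ), 0 < l →
      IntegrableOn (fun s => gfun (s * t) / s ^ 2) (Ioi l) := by
    intro t ht l hl
    exact integrableOn_Ioi_deriv_of_nonneg' (hderiv t ht l hl) (hpos' t ht l hl) (htend t ht)
  -- the key Fubini identity: φ l = l * ∫_{s>l} H(s)/s²
  have main : ∀ l : ℝ, 0 < l →
      φ l = l * ∫ s in Ioi l, H s / s ^ 2 ∧
      IntegrableOn (fun s => H s / s ^ 2) (Ioi l) := by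
    intro l hl
    set ν := μ.restrict (Ioi (0:ℝ)) with hν
    have hmeas : Measurable (fun p : ℝ × ℝ => gfun (p.1 * p.2) / p.1 ^ 2) :=
      (gfun_cont.measurable.comp (measurable_fst.mul measurable_snd)).div
        (measurable_fst.pow_const 2)
    have hK : Integrable (fun p : ℝ × ℝ => gfun (p.1 * p.2) / p.1 ^ 2)
        ((volume.restrict (Ioi l)).prod ν) := by
      refine ⟨hmeas.aestronglyMeasurable, ?_⟩
      rw [HasFiniteIntegral, lintegral_prod_symm _ hmeas.enorm.aemeasurable]
      have hbound : ∀ᵐ t ∂ν, (∫⁻ s in Ioi l, ‖gfun (s * t) / s ^ 2‖₊ ∂volume)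
          ≤ ENNReal.ofReal (max 1 l⁻¹ * min 1 t) := by
        filter_upwards [ae_restrict_mem measurableSet_Ioi] with t ht
        have ht0 : (0:ℝ) < t := ht
        have heq1 : ∫⁻ s in Ioi l, ‖gfun (s * t) / s ^ 2‖₊ ∂volume
            = ENNReal.ofReal (∫ s in Ioi l, gfun (s * t) / s ^ 2) := by
          rw [ofReal_integral_eq_lintegral_ofReal (hcalc_int t ht0 l hl)
            ((ae_restrict_mem measurableSet_Ioi).mono fun s hs => hpos' t ht0 l hl s hs)]
          apply lintegral_congr_ae
          filter_upwards [ae_restrict_mem measurableSet_Ioi] with s hs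
          exact Real.enorm_eq_ofReal (hpos' t ht0 l hl s hs)
        rw [heq1, hcalc t ht0 l hl]
        apply ENNReal.ofReal_le_ofReal
        have hlt : 0 ≤ l * t := by positivity
        have h1 : 1 - Real.exp (-(l * t)) ≤ min 1 (l * t) := one_sub_exp_le_min hlt
        have h2 : min 1 (l * t) ≤ max 1 l * min 1 t := min_mul_ineq hl.le ht0.le
        rw [div_le_iff₀ hl]
        calc 1 - Real.exp (-(l * t)) ≤ max 1 l * min 1 t := h1.trans h2
          _ = max 1 l⁻¹ * min 1 t * l := by
            rcases le_total l 1 with h | h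
            · rw [max_eq_left h, max_eq_right ((one_le_inv_iff₀.mpr ⟨hl, h⟩))]
              field_simp
            · rw [max_eq_right h, max_eq_left (inv_le_one_of_one_le₀ h)]
              ring
      calc ∫⁻ t, (∫⁻ s in Ioi l, ‖gfun (s * t) / s ^ 2‖₊ ∂volume) ∂ν
          ≤ ∫⁻ t, ENNReal.ofReal (max 1 l⁻¹ * min 1 t) ∂ν := lintegral_mono_ae hbound
        _ < ⊤ := (hμ.const_mul (max 1 l⁻¹)).lintegral_lt_top
    have hswap := integral_integral_swap
      (f := fun s t => gfun (s * t) / s ^ 2)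
      (μ := volume.restrict (Ioi l)) (ν := ν) hK
    have hLHS : ∫ s in Ioi l, (∫ t, gfun (s * t) / s ^ 2 ∂ν) ∂volume
        = ∫ s in Ioi l, H s / s ^ 2 ∂volume := by
      apply integral_congr_ae
      filter_upwards [ae_restrict_mem measurableSet_Ioi] with s hs
      have hs0 : (0:ℝ) < s := lt_trans hl hs
      rw [hHs s hs0, ← integral_div]
    have hRHS : ∫ t, (∫ s in Ioi l, gfun (s * t) / s ^ 2 ∂volume) ∂ν = φ l / l := by
      rw [hφ l, ← integral_div]
      apply integral_congr_ae
      filter_upwards [ae_restrict_mem measurableSet_Ioi] with t ht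
      exact hcalc t ht l hl
    constructor
    · rw [hLHS] at hswap
      rw [hswap, hRHS]
      field_simp
    · have := hK.integral_prod_left
      apply Integrable.congr this
      filter_upwards [ae_restrict_mem measurableSet_Ioi] with s hs
      have hs0 : (0:ℝ) < s := lt_trans hl hs
      rw [hHs s hs0, ← integral_div]
  -- assembly
  intro lam hlam x hx
  have hl : 0 < lam := lt_of_le_of_lt ha hlam
  have hx0 : (0:ℝ) < x := lt_of_lt_of_le one_pos hx
  obtain ⟨hid1, hint1⟩ := main lam hl
  obtain ⟨hid2, hint2⟩ := main (lam * x) (mul_pos hl hx0)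
  have hcv : x * ∫ u in Ioi lam, H (x * u) / (x * u) ^ 2
      = ∫ s in Ioi (lam * x), H s / s ^ 2 := by
    rw [integral_comp_mul_left_Ioi (fun s => H s / s ^ 2) lam hx0, smul_eq_mul, ← mul_assoc,
      mul_inv_cancel₀ hx0.ne', one_mul, mul_comm x lam]
  have hintr : IntegrableOn (fun u => x ^ 2 * (H (x * u) / (x * u) ^ 2)) (Ioi lam) := by
    have h2 : IntegrableOn (fun s => H s / s ^ 2) (Ioi (x * lam)) := by
      rw [mul_comm x lam]; exact hint2
    have h3 := (integrableOn_Ioi_comp_mul_left_iff (fun s => H s / s ^ 2) lam hx0).mpr h2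
    exact h3.const_mul _
  have hmono : ∫ u in Ioi lam, C_L * x ^ γ * (H u / u ^ 2)
      ≤ ∫ u in Ioi lam, x ^ 2 * (H (x * u) / (x * u) ^ 2) := by
    apply setIntegral_mono_on (hint1.const_mul _) hintr measurableSet_Ioi
    intro u hu
    have hu0 : (0:ℝ) < u := lt_trans hl hu
    have hua : a < u := lt_trans hlam hu
    have hkey : C_L * x ^ γ * H u ≤ H (x * u) := by
      rw [mul_comm x u]; exact hLH u hua x hx
    have heq : x ^ 2 * (H (x * u) / (x * u) ^ 2) = H (x * u) / u ^ 2 := by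
      field_simp
    have heq2 : C_L * x ^ γ * (H u / u ^ 2) = (C_L * x ^ γ * H u) / u ^ 2 := by ring
    rw [heq, heq2]
    exact (div_le_div_iff_of_pos_right (pow_pos hu0 2)).mpr hkey
  rw [integral_const_mul, integral_const_mul] at hmono
  have hfinal := mul_le_mul_of_nonneg_left hmono hl.le
  calc C_L * x ^ γ * φ lam
      = lam * (C_L * x ^ γ * ∫ u in Ioi lam, H u / u ^ 2) := by rw [hid1]; ring
    _ ≤ lam * (x ^ 2 * ∫ u in Ioi lam, H (x * u) / (x * u) ^ 2) := hfinal
    _ = (lam * x) * (x * ∫ u in Ioi lam, H (x * u) / (x * u) ^ 2) := by ring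
    _ = φ (lam * x) := by rw [hcv, ← hid2]
end
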